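/- arXiv:math/0611635 — 4 statements merged into one kernel-verified Lean document; each statement's English description precedes it below -/
import Mathlib

section
/- In the free (product measure) case μ = ∏_{i∈T} μ_i on E^T with T finite, the Efron–Stein inequality holds: Var_μ(f) ≤ E^μ ∑_{i∈T} Var_{μ_i}(f(x with i-th coordinate varying)) for all f ∈ L²(μ). -/
open MeasureTheory Function


section aux
variable {E T : Type*} [MeasurableSpace E] [Fintype T] [DecidableEq T]
  (ν : T → Measure E) [∀ i, IsProbabilityMeasure (ν i)]

lemma es_mp (i : T) :
    MeasurePreserving (fun p : (T → E) × E => Function.update p.1 i p.2)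
      ((Measure.pi ν).prod (ν i)) (Measure.pi ν) := by
  refine ⟨measurable_update', ?_⟩
  refine (Measure.pi_eq fun s hs => ?_).symm
  rw [Measure.map_apply measurable_update' (MeasurableSet.univ_pi hs)]
  have hpre : (fun p : (T → E) × E => Function.update p.1 i p.2) ⁻¹' (Set.pi Set.univ s)
      = (Set.pi Set.univ (Function.update s i Set.univ)) ×ˢ (s i) := by
    ext ⟨x, z⟩
    simp only [Set.mem_preimage, Set.mem_pi, Set.mem_univ, forall_true_left, Set.mem_prod]
    constructor
    · intro h
      refine ⟨fun j => ?_, by simpa using h i⟩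
      rcases eq_or_ne j i with rfl | hj
      · simp
      · simpa [Function.update_apply, hj] using h j
    · rintro ⟨h1, h2⟩ j
      rcases eq_or_ne j i with rfl | hj
      · simpa using h2
      · simpa [Function.update_apply, hj] using h1 j
  rw [hpre, Measure.prod_prod, Measure.pi_pi]
  have h1 : ∀ j, ν j (Function.update s i Set.univ j)
      = Function.update (fun j => ν j (s j)) i 1 j := by
    intro j
    rcases eq_or_ne j i with rfl | hj
    · simp
    · simp [Function.update_apply, hj]
  rw [Finset.prod_congr rfl (fun j _ => h1 j),
    Finset.prod_update_of_mem (Finset.mem_univ i), one_mul,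
    Finset.prod_eq_mul_prod_sdiff_singleton_of_mem (Finset.mem_univ i) (fun j => ν j (s j)), mul_comm]
end aux

section aux
variable {α : Type*} [MeasurableSpace α]

/-- product of two L² functions is integrable -/
lemma es_mul_int {m : Measure α} {f g : α → ℝ}
    (hf : AEStronglyMeasurable f m) (hg : AEStronglyMeasurable g m)
    (h2f : Integrable (fun x => f x ^ 2) m) (h2g : Integrable (fun x => g x ^ 2) m) :
    Integrable (fun x => f x * g x) m := by
  refine Integrable.mono' ((h2f.add h2g).const_mul (1/2)) (hf.mul hg) ?_
  refine Filter.Eventually.of_forall fun x => ?_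
  simp only [Pi.add_apply]
  rw [Real.norm_eq_abs, abs_mul]
  nlinarith [sq_nonneg (|f x| - |g x|), sq_abs (f x), sq_abs (g x), abs_nonneg (f x),
    abs_nonneg (g x)]

/-- Cauchy–Schwarz for probability measures -/
lemma es_cs {κ : Measure α} [IsProbabilityMeasure κ] {h : α → ℝ}
    (h1 : Integrable h κ) (h2 : Integrable (fun z => h z ^ 2) κ) :
    (∫ z, h z ∂κ) ^ 2 ≤ ∫ z, h z ^ 2 ∂κ := by
  set c := ∫ z, h z ∂κ with hc
  have hnn : (0:ℝ) ≤ ∫ z, (h z - c) ^ 2 ∂κ := integral_nonneg fun z => sq_nonneg _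
  have hexp : ∀ z, (h z - c) ^ 2 = h z ^ 2 - (2*c) * h z + c ^ 2 := fun z => by ring
  rw [show (fun z => (h z - c)^2) = fun z => h z ^ 2 - (2*c) * h z + c ^ 2 from funext hexp] at hnn
  have ha : Integrable (fun z => h z ^ 2 - (2*c) * h z) κ := h2.sub (h1.const_mul (2*c))
  rw [integral_add ha (integrable_const _),
    integral_sub h2 (h1.const_mul (2*c)), integral_const_mul, integral_const] at hnn
  simp only [probReal_univ, smul_eq_mul, one_mul] at hnn
  nlinarith [hnn]
end aux

set_option linter.unusedSectionVars false
section esj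
variable {E T : Type*} [MeasurableSpace E] [Fintype T] [DecidableEq T]
  (ν : T → Measure E) [∀ i, IsProbabilityMeasure (ν i)]

/-- integrate out coordinate `i` -/
noncomputable def esJ (i : T) (g : (T → E) → ℝ) : (T → E) → ℝ :=
  fun x => ∫ z, g (Function.update x i z) ∂ν i

variable {ν}

lemma esJ_meas {i : T} {g : (T → E) → ℝ} (hg : Measurable g) : Measurable (esJ ν i g) :=
  (StronglyMeasurable.integral_prod_right'
    (f := fun p : (T → E) × E => g (Function.update p.1 i p.2))
    (hg.comp measurable_update').stronglyMeasurable).measurable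

lemma es_comp_int {i : T} {g : (T → E) → ℝ} (hg : Measurable g)
    (hgi : Integrable g (Measure.pi ν)) :
    Integrable (fun p : (T → E) × E => g (Function.update p.1 i p.2))
      ((Measure.pi ν).prod (ν i)) := by
  have := ((es_mp ν i).integrable_comp hg.aestronglyMeasurable).2 hgi
  simpa [Function.comp_def] using this

lemma esJ_int {i : T} {g : (T → E) → ℝ} (hg : Measurable g)
    (hgi : Integrable g (Measure.pi ν)) : Integrable (esJ ν i g) (Measure.pi ν) :=
  (es_comp_int hg hgi).integral_prod_left

lemma esJ_integral {i : T} {g : (T → E) → ℝ} (hg : Measurable g)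
    (hgi : Integrable g (Measure.pi ν)) :
    ∫ x, esJ ν i g x ∂(Measure.pi ν) = ∫ x, g x ∂(Measure.pi ν) := by
  have h := (integral_prod (fun p : (T → E) × E => g (Function.update p.1 i p.2))
    (es_comp_int (i := i) hg hgi)).symm
  unfold esJ
  rw [h]
  calc ∫ p : (T → E) × E, g (Function.update p.1 i p.2) ∂((Measure.pi ν).prod (ν i))
      = ∫ y, g y ∂(Measure.map (fun p : (T → E) × E => Function.update p.1 i p.2)
          ((Measure.pi ν).prod (ν i))) :=
        (integral_map (es_mp ν i).measurable.aemeasurable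
          (by rw [(es_mp ν i).map_eq]; exact hg.aestronglyMeasurable)).symm
    _ = ∫ x, g x ∂(Measure.pi ν) := by rw [(es_mp ν i).map_eq]

lemma esJ_update_self {i : T} {g : (T → E) → ℝ} (x : T → E) (z : E) :
    esJ ν i g (Function.update x i z) = esJ ν i g x := by
  simp only [esJ, Function.update_idem]

lemma es_slice_ae {i : T} {g : (T → E) → ℝ} (hg : Measurable g)
    (hg2 : MemLp g 2 (Measure.pi ν)) :
    ∀ᵐ x ∂(Measure.pi ν), Integrable (fun z => g (Function.update x i z)) (ν i) ∧
      Integrable (fun z => g (Function.update x i z) ^ 2) (ν i) := by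
  have h1 : Integrable g (Measure.pi ν) := hg2.integrable one_le_two
  have h2 : Integrable (fun x => g x ^ 2) (Measure.pi ν) := hg2.integrable_sq
  have s1 := (es_comp_int (i := i) hg h1).prod_right_ae
  have s2 := (es_comp_int (i := i) (hg.pow_const 2) h2).prod_right_ae
  filter_upwards [s1, s2] with x hx1 hx2 using ⟨hx1, hx2⟩

lemma esJ_sq_le {i : T} {g : (T → E) → ℝ} (hg : Measurable g)
    (hg2 : MemLp g 2 (Measure.pi ν)) :
    ∀ᵐ x ∂(Measure.pi ν), (esJ ν i g x) ^ 2 ≤ esJ ν i (fun y => g y ^ 2) x := by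
  filter_upwards [es_slice_ae hg hg2] with x hx
  exact es_cs hx.1 hx.2

lemma esJ_memLp {i : T} {g : (T → E) → ℝ} (hg : Measurable g)
    (hg2 : MemLp g 2 (Measure.pi ν)) : MemLp (esJ ν i g) 2 (Measure.pi ν) := by
  rw [memLp_two_iff_integrable_sq (esJ_meas hg).aestronglyMeasurable]
  refine Integrable.mono' (esJ_int (i := i) (hg.pow_const 2) hg2.integrable_sq)
    (((esJ_meas hg).pow_const 2).aestronglyMeasurable) ?_
  filter_upwards [esJ_sq_le (i := i) hg hg2] with x hx
  rw [Real.norm_eq_abs, abs_of_nonneg (sq_nonneg _)]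
  exact hx

lemma esJ_mul {i : T} (g h : (T → E) → ℝ) :
    esJ ν i (fun y => g y * esJ ν i h y) = fun x => esJ ν i g x * esJ ν i h x := by
  funext x
  simp only [esJ, Function.update_idem]
  rw [← integral_mul_const]

lemma esJ_adjoint {i : T} {g h : (T → E) → ℝ} (hgm : Measurable g) (hhm : Measurable h)
    (hg2 : MemLp g 2 (Measure.pi ν)) (hh2 : MemLp h 2 (Measure.pi ν)) :
    ∫ x, g x * esJ ν i h x ∂(Measure.pi ν)
      = ∫ x, esJ ν i g x * esJ ν i h x ∂(Measure.pi ν) := by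
  have hJh2 : MemLp (esJ ν i h) 2 (Measure.pi ν) := esJ_memLp hhm hh2
  have hint : Integrable (fun y => g y * esJ ν i h y) (Measure.pi ν) :=
    es_mul_int hgm.aestronglyMeasurable (esJ_meas hhm).aestronglyMeasurable
      hg2.integrable_sq hJh2.integrable_sq
  rw [← esJ_integral (g := fun y => g y * esJ ν i h y) (hgm.mul (esJ_meas hhm)) hint, esJ_mul]
end esj

section comm
set_option linter.unusedSectionVars false
variable {E T : Type*} [MeasurableSpace E] [Fintype T] [DecidableEq T]
  {ν : T → Measure E} [∀ i, IsProbabilityMeasure (ν i)]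

lemma esJ_comm {i j : T} (hij : i ≠ j) {g : (T → E) → ℝ} (hg : Measurable g)
    (hgi : Integrable g (Measure.pi ν)) :
    esJ ν i (esJ ν j g) =ᵐ[Measure.pi ν] esJ ν j (esJ ν i g) := by
  -- the doubly-updated map is measure preserving
  have mp2 : MeasurePreserving
      (fun q : ((T → E) × E) × E => Function.update (Function.update q.1.1 i q.1.2) j q.2)
      (((Measure.pi ν).prod (ν i)).prod (ν j)) (Measure.pi ν) := by
    have h1 : MeasurePreserving (Prod.map (fun p : (T → E) × E => Function.update p.1 i p.2)
        (id : E → E)) (((Measure.pi ν).prod (ν i)).prod (ν j)) ((Measure.pi ν).prod (ν j)) :=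
      (es_mp ν i).prod (MeasurePreserving.id (ν j))
    exact (es_mp ν j).comp h1
  have hFm : Measurable (fun r : (T → E) × (E × E) =>
      g (Function.update (Function.update r.1 i r.2.1) j r.2.2)) := by
    apply hg.comp
    have m1 : Measurable fun r : (T → E) × (E × E) => Function.update r.1 i r.2.1 :=
      measurable_update'.comp (measurable_fst.prodMk (measurable_fst.comp measurable_snd))
    exact measurable_update'.comp (m1.prodMk (measurable_snd.comp measurable_snd))
  -- integrability of the doubly-updated composition
  have hQ : Integrable
      (fun q : ((T → E) × E) × E => g (Function.update (Function.update q.1.1 i q.1.2) j q.2))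
      (((Measure.pi ν).prod (ν i)).prod (ν j)) := by
    have := (mp2.integrable_comp hg.aestronglyMeasurable).2 hgi
    simpa [Function.comp_def] using this
  have hF : Integrable (fun r : (T → E) × (E × E) =>
      g (Function.update (Function.update r.1 i r.2.1) j r.2.2))
      ((Measure.pi ν).prod ((ν i).prod (ν j))) := by
    refine ((measurePreserving_prodAssoc (Measure.pi ν) (ν i) (ν j)).integrable_comp
      hFm.aestronglyMeasurable).1 ?_
    simpa [Function.comp_def, MeasurableEquiv.prodAssoc] using hQ
  have hae := hF.prod_right_ae
  filter_upwards [hae] with x hx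
  have swap := integral_integral_swap
    (f := fun z w => g (Function.update (Function.update x i z) j w)) hx
  calc esJ ν i (esJ ν j g) x
      = ∫ z, ∫ w, g (Function.update (Function.update x i z) j w) ∂ν j ∂ν i := rfl
    _ = ∫ w, ∫ z, g (Function.update (Function.update x i z) j w) ∂ν i ∂ν j := swap
    _ = esJ ν j (esJ ν i g) x := by
        simp only [esJ]
        congr 1
        funext w
        congr 1
        funext z
        rw [Function.update_comm hij]
end comm

section key
set_option linter.unusedSectionVars false
variable {E T : Type*} [MeasurableSpace E] [Fintype T] [DecidableEq T]
  {ν : T → Measure E} [∀ i, IsProbabilityMeasure (ν i)]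

lemma esJ_sub_ae {i : T} {g h : (T → E) → ℝ} (hgm : Measurable g) (hhm : Measurable h)
    (hg2 : MemLp g 2 (Measure.pi ν)) (hh2 : MemLp h 2 (Measure.pi ν)) :
    esJ ν i (fun y => g y - h y) =ᵐ[Measure.pi ν] fun x => esJ ν i g x - esJ ν i h x := by
  filter_upwards [es_slice_ae (i := i) hgm hg2, es_slice_ae (i := i) hhm hh2] with x hx hy
  simp only [esJ]
  exact integral_sub hx.1 hy.1

lemma esS_esJ_le {i : T} {φ : (T → E) → ℝ} (hφ : Measurable φ)
    (hφ2 : MemLp φ 2 (Measure.pi ν)) :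
    ∫ x, (esJ ν i φ x) ^ 2 ∂(Measure.pi ν) ≤ ∫ x, φ x ^ 2 ∂(Measure.pi ν) := by
  have hJm : Measurable (esJ ν i φ) := esJ_meas hφ
  have hJ2 : MemLp (esJ ν i φ) 2 (Measure.pi ν) := esJ_memLp hφ hφ2
  have hadj := esJ_adjoint (i := i) hφ hφ hφ2 hφ2
  have hmulJJ : Integrable (fun x => esJ ν i φ x * esJ ν i φ x) (Measure.pi ν) :=
    es_mul_int hJm.aestronglyMeasurable hJm.aestronglyMeasurable hJ2.integrable_sq
      hJ2.integrable_sq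
  have hmul : Integrable (fun x => φ x * esJ ν i φ x) (Measure.pi ν) :=
    es_mul_int hφ.aestronglyMeasurable hJm.aestronglyMeasurable hφ2.integrable_sq
      hJ2.integrable_sq
  have h0 : (0:ℝ) ≤ ∫ x, (φ x - esJ ν i φ x) ^ 2 ∂(Measure.pi ν) :=
    integral_nonneg fun x => sq_nonneg _
  have hexp : (fun x => (φ x - esJ ν i φ x) ^ 2)
      = fun x => (φ x ^ 2 - 2 * (φ x * esJ ν i φ x)) + (esJ ν i φ x) ^ 2 :=
    funext fun x => by ring
  rw [hexp] at h0
  have ha : Integrable (fun x => φ x ^ 2 - 2 * (φ x * esJ ν i φ x)) (Measure.pi ν) :=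
    hφ2.integrable_sq.sub (hmul.const_mul 2)
  rw [integral_add ha hJ2.integrable_sq,
    integral_sub hφ2.integrable_sq (hmul.const_mul 2), integral_const_mul, hadj] at h0
  have hJJ : ∫ x, esJ ν i φ x * esJ ν i φ x ∂(Measure.pi ν)
      = ∫ x, (esJ ν i φ x) ^ 2 ∂(Measure.pi ν) := by
    congr 1; funext x; ring
  rw [hJJ] at h0
  linarith

lemma es_key {i j : T} (hij : i ≠ j) {g : (T → E) → ℝ} (hg : Measurable g)
    (hg2 : MemLp g 2 (Measure.pi ν)) :
    ∫ x, (esJ ν j g x) ^ 2 ∂(Measure.pi ν)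
      - ∫ x, (esJ ν i (esJ ν j g) x) ^ 2 ∂(Measure.pi ν)
    ≤ ∫ x, g x ^ 2 ∂(Measure.pi ν) - ∫ x, (esJ ν i g x) ^ 2 ∂(Measure.pi ν) := by
  have hum : Measurable (esJ ν i g) := esJ_meas hg
  have hvm : Measurable (esJ ν j g) := esJ_meas hg
  have hwm : Measurable (esJ ν j (esJ ν i g)) := esJ_meas hum
  have hu2 : MemLp (esJ ν i g) 2 (Measure.pi ν) := esJ_memLp hg hg2
  have hv2 : MemLp (esJ ν j g) 2 (Measure.pi ν) := esJ_memLp hg hg2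
  have hw2 : MemLp (esJ ν j (esJ ν i g)) 2 (Measure.pi ν) := esJ_memLp hum hu2
  have hgi : Integrable g (Measure.pi ν) := hg2.integrable one_le_two
  have hφm : Measurable (fun y => g y - esJ ν i g y) := hg.sub hum
  have hφ2 : MemLp (fun y => g y - esJ ν i g y) 2 (Measure.pi ν) := hg2.sub hu2
  -- contraction applied to φ = g - J_i g
  have hcon := esS_esJ_le (i := j) hφm hφ2
  -- identify ∫ φ² = Sg - Su
  have hadj_i := esJ_adjoint (i := i) hg hg hg2 hg2
  have hmul_gu : Integrable (fun x => g x * esJ ν i g x) (Measure.pi ν) :=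
    es_mul_int hg.aestronglyMeasurable hum.aestronglyMeasurable hg2.integrable_sq
      hu2.integrable_sq
  have hφsq : ∫ x, (g x - esJ ν i g x) ^ 2 ∂(Measure.pi ν)
      = ∫ x, g x ^ 2 ∂(Measure.pi ν) - ∫ x, (esJ ν i g x) ^ 2 ∂(Measure.pi ν) := by
    have hexp : (fun x => (g x - esJ ν i g x) ^ 2)
        = fun x => (g x ^ 2 - 2 * (g x * esJ ν i g x)) + (esJ ν i g x) ^ 2 :=
      funext fun x => by ring
    have ha : Integrable (fun x => g x ^ 2 - 2 * (g x * esJ ν i g x)) (Measure.pi ν) :=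
      hg2.integrable_sq.sub (hmul_gu.const_mul 2)
    rw [hexp, integral_add ha hu2.integrable_sq,
      integral_sub hg2.integrable_sq (hmul_gu.const_mul 2), integral_const_mul, hadj_i]
    have hJJ : ∫ x, esJ ν i g x * esJ ν i g x ∂(Measure.pi ν)
        = ∫ x, (esJ ν i g x) ^ 2 ∂(Measure.pi ν) := by congr 1; funext x; ring
    rw [hJJ]; ring
  -- identify ∫ (J_j φ)² = Sv - Sw
  have hsub := esJ_sub_ae (i := j) hg hum hg2 hu2
  have hJφsq : ∫ x, (esJ ν j (fun y => g y - esJ ν i g y) x) ^ 2 ∂(Measure.pi ν)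
      = ∫ x, (esJ ν j g x - esJ ν j (esJ ν i g) x) ^ 2 ∂(Measure.pi ν) := by
    refine integral_congr_ae ?_
    filter_upwards [hsub] with x hx
    rw [hx]
  -- ∫ v w = ∫ w²  (uses commutation)
  have hcomm : esJ ν i (esJ ν j g) =ᵐ[Measure.pi ν] esJ ν j (esJ ν i g) := esJ_comm hij hg hgi
  have hvw : ∫ x, esJ ν j g x * esJ ν j (esJ ν i g) x ∂(Measure.pi ν)
      = ∫ x, (esJ ν j (esJ ν i g) x) ^ 2 ∂(Measure.pi ν) := by
    -- ∫ v w = ∫ g w  (adjoint j with h = J_i g)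
    have h1 := esJ_adjoint (i := j) hg hum hg2 hu2
    -- ∫ g w = ∫ g (J_i v) = ∫ (J_i g)(J_i v) = ∫ u (J_i v) = ∫ u w = ∫ w²
    have h2 : ∫ x, g x * esJ ν j (esJ ν i g) x ∂(Measure.pi ν)
        = ∫ x, g x * esJ ν i (esJ ν j g) x ∂(Measure.pi ν) := by
      refine integral_congr_ae ?_
      filter_upwards [hcomm] with x hx
      rw [hx]
    have h3 := esJ_adjoint (i := i) hg hvm hg2 hv2
    have h4 : ∫ x, esJ ν i g x * esJ ν i (esJ ν j g) x ∂(Measure.pi ν)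
        = ∫ x, esJ ν i g x * esJ ν j (esJ ν i g) x ∂(Measure.pi ν) := by
      refine integral_congr_ae ?_
      filter_upwards [hcomm] with x hx
      rw [hx]
    have h5 := esJ_adjoint (i := j) hum hum hu2 hu2
    have h6 : ∫ x, esJ ν j (esJ ν i g) x * esJ ν j (esJ ν i g) x ∂(Measure.pi ν)
        = ∫ x, (esJ ν j (esJ ν i g) x) ^ 2 ∂(Measure.pi ν) := by congr 1; funext x; ring
    rw [← h1, h2, h3, h4, h5, h6]
  have hmul_vw : Integrable (fun x => esJ ν j g x * esJ ν j (esJ ν i g) x) (Measure.pi ν) :=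
    es_mul_int hvm.aestronglyMeasurable hwm.aestronglyMeasurable hv2.integrable_sq
      hw2.integrable_sq
  have hvwsq : ∫ x, (esJ ν j g x - esJ ν j (esJ ν i g) x) ^ 2 ∂(Measure.pi ν)
      = ∫ x, (esJ ν j g x) ^ 2 ∂(Measure.pi ν)
        - ∫ x, (esJ ν j (esJ ν i g) x) ^ 2 ∂(Measure.pi ν) := by
    have hexp : (fun x => (esJ ν j g x - esJ ν j (esJ ν i g) x) ^ 2)
        = fun x => ((esJ ν j g x) ^ 2 - 2 * (esJ ν j g x * esJ ν j (esJ ν i g) x))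
          + (esJ ν j (esJ ν i g) x) ^ 2 := funext fun x => by ring
    have ha : Integrable
        (fun x => (esJ ν j g x) ^ 2 - 2 * (esJ ν j g x * esJ ν j (esJ ν i g) x))
        (Measure.pi ν) := hv2.integrable_sq.sub (hmul_vw.const_mul 2)
    rw [hexp, integral_add ha hw2.integrable_sq,
      integral_sub hv2.integrable_sq (hmul_vw.const_mul 2), integral_const_mul, hvw]
    ring
  -- conclude: ∫ (J_i J_j g)² = ∫ (J_j J_i g)²
  have hsw : ∫ x, (esJ ν i (esJ ν j g) x) ^ 2 ∂(Measure.pi ν)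
      = ∫ x, (esJ ν j (esJ ν i g) x) ^ 2 ∂(Measure.pi ν) := by
    refine integral_congr_ae ?_
    filter_upwards [hcomm] with x hx
    rw [hx]
  rw [hsw]
  calc ∫ x, (esJ ν j g x) ^ 2 ∂(Measure.pi ν)
        - ∫ x, (esJ ν j (esJ ν i g) x) ^ 2 ∂(Measure.pi ν)
      = ∫ x, (esJ ν j (fun y => g y - esJ ν i g y) x) ^ 2 ∂(Measure.pi ν) := by
        rw [hJφsq, hvwsq]
    _ ≤ ∫ x, (g x - esJ ν i g x) ^ 2 ∂(Measure.pi ν) := hcon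
    _ = _ := hφsq
end key

section lists
set_option linter.unusedSectionVars false
variable {E T : Type*} [MeasurableSpace E] [Fintype T] [DecidableEq T]

/-- iterated coordinate-integration -/
noncomputable def esK (ν : T → Measure E) : List T → ((T → E) → ℝ) → ((T → E) → ℝ)
  | [], g => g
  | (i :: l), g => esJ ν i (esK ν l g)

variable {ν : T → Measure E} [∀ i, IsProbabilityMeasure (ν i)]

lemma esK_meas {l : List T} {g : (T → E) → ℝ} (hg : Measurable g) :
    Measurable (esK ν l g) := by
  induction l with
  | nil => exact hg
  | cons i l ih => exact esJ_meas ih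

lemma esK_memLp {l : List T} {g : (T → E) → ℝ} (hg : Measurable g)
    (hg2 : MemLp g 2 (Measure.pi ν)) : MemLp (esK ν l g) 2 (Measure.pi ν) := by
  induction l with
  | nil => exact hg2
  | cons i l ih => exact esJ_memLp (esK_meas hg) ih

lemma esK_integral {l : List T} {g : (T → E) → ℝ} (hg : Measurable g)
    (hg2 : MemLp g 2 (Measure.pi ν)) :
    ∫ x, esK ν l g x ∂(Measure.pi ν) = ∫ x, g x ∂(Measure.pi ν) := by
  induction l with
  | nil => rfl
  | cons i l ih =>
      rw [show esK ν (i :: l) g = esJ ν i (esK ν l g) from rfl,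
        esJ_integral (esK_meas hg) ((esK_memLp hg hg2).integrable one_le_two), ih]

lemma esK_update {l : List T} {g : (T → E) → ℝ} {j : T} (hj : j ∈ l) (x : T → E) (z : E) :
    esK ν l g (Function.update x j z) = esK ν l g x := by
  induction l generalizing x z with
  | nil => simp at hj
  | cons i l ih =>
      rcases eq_or_ne j i with rfl | hne
      · exact esJ_update_self x z
      · have hj' : j ∈ l := by
          rcases List.mem_cons.1 hj with h | h
          · exact absurd h hne
          · exact h
        show esJ ν i (esK ν l g) (Function.update x j z) = esJ ν i (esK ν l g) x
        simp only [esJ]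
        congr 1
        funext w
        rw [Function.update_comm hne, ih hj']

lemma es_const_of_inv {h : (T → E) → ℝ}
    (hinv : ∀ (j : T) (x : T → E) (z : E), h (Function.update x j z) = h x) (x y : T → E) :
    h x = h y := by
  suffices H : ∀ s : Finset T, h (fun j => if j ∈ s then y j else x j) = h x by
    have h1 := H Finset.univ
    simp only [Finset.mem_univ, if_true] at h1
    exact h1.symm
  intro s
  induction s using Finset.induction_on with
  | empty => simp
  | @insert a s ha ih =>
      have : (fun j => if j ∈ insert a s then y j else x j)
          = Function.update (fun j => if j ∈ s then y j else x j) a (y a) := by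
        funext j
        rcases eq_or_ne j a with rfl | hj
        · simp
        · simp [Function.update_apply, hj, Finset.mem_insert, hj]
      rw [this, hinv, ih]
end lists

section main
set_option linter.unusedSectionVars false
variable {E T : Type*} [MeasurableSpace E] [Fintype T] [DecidableEq T]
  {ν : T → Measure E} [∀ i, IsProbabilityMeasure (ν i)]

lemma es_mono {i : T} {l : List T} (hil : i ∉ l) {f : (T → E) → ℝ} (hf : Measurable f)
    (hf2 : MemLp f 2 (Measure.pi ν)) :
    ∫ x, (esK ν l f x) ^ 2 ∂(Measure.pi ν)
      - ∫ x, (esJ ν i (esK ν l f) x) ^ 2 ∂(Measure.pi ν)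
    ≤ ∫ x, f x ^ 2 ∂(Measure.pi ν) - ∫ x, (esJ ν i f x) ^ 2 ∂(Measure.pi ν) := by
  induction l with
  | nil => exact le_refl _
  | cons j l ih =>
      have hij : i ≠ j := fun h => hil (h ▸ List.mem_cons_self (a := j) (l := l))
      have hil' : i ∉ l := fun h => hil (List.mem_cons_of_mem j h)
      have key := es_key (ν := ν) hij (esK_meas (l := l) hf) (esK_memLp hf hf2)
      exact key.trans (ih hil')

lemma es_main {l : List T} (hl : l.Nodup) {f : (T → E) → ℝ} (hf : Measurable f)
    (hf2 : MemLp f 2 (Measure.pi ν)) :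
    ∫ x, f x ^ 2 ∂(Measure.pi ν) - ∫ x, (esK ν l f x) ^ 2 ∂(Measure.pi ν)
    ≤ (l.map (fun i => ∫ x, f x ^ 2 ∂(Measure.pi ν)
        - ∫ x, (esJ ν i f x) ^ 2 ∂(Measure.pi ν))).sum := by
  induction l with
  | nil =>
      show (∫ x, f x ^ 2 ∂(Measure.pi ν)) - ∫ x, f x ^ 2 ∂(Measure.pi ν) ≤ _
      simp
  | cons i l ih =>
      have hil : i ∉ l := (List.nodup_cons.1 hl).1
      have hl' : l.Nodup := (List.nodup_cons.1 hl).2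
      have h1 := ih hl'
      have h2 := es_mono (ν := ν) hil hf hf2
      simp only [List.map_cons, List.sum_cons]
      have : esK ν (i :: l) f = esJ ν i (esK ν l f) := rfl
      rw [this]
      linarith
end main


/-- Efron–Stein inequality: for a product probability measure `μ = ∏_{i∈T} μ_i` on `E^T`
with `T` finite, the variance of any `f ∈ L²(μ)` is bounded by the expected sum of the
conditional variances in each coordinate (the others being fixed). -/
theorem efron_stein
    {E T : Type*} [MeasurableSpace E] [Fintype T] [DecidableEq T]
    (ν : T → Measure E) [∀ i, IsProbabilityMeasure (ν i)]
    (f : (T → E) → ℝ) (hfm : Measurable f) (hf2 : MemLp f 2 (Measure.pi ν)) :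
    (∫ x, f x ^ 2 ∂(Measure.pi ν)) - (∫ x, f x ∂(Measure.pi ν)) ^ 2 ≤
      ∫ x, ∑ i, ((∫ z, (f (Function.update x i z)) ^ 2 ∂(ν i)) -
        (∫ z, f (Function.update x i z) ∂(ν i)) ^ 2) ∂(Measure.pi ν) := by
  show (∫ x, f x ^ 2 ∂(Measure.pi ν)) - (∫ x, f x ∂(Measure.pi ν)) ^ 2 ≤
    ∫ x, ∑ i, (esJ ν i (fun y => f y ^ 2) x - (esJ ν i f x) ^ 2) ∂(Measure.pi ν)
  set l : List T := Finset.univ.toList with hldef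
  have hln : l.Nodup := Finset.nodup_toList _
  have hcov : ∀ j : T, j ∈ l := fun j => Finset.mem_toList.2 (Finset.mem_univ j)
  -- the underlying space is nonempty
  have hne : Nonempty (T → E) := by
    by_contra h
    rw [not_nonempty_iff] at h
    have h1 : (Measure.pi ν) Set.univ = 1 := measure_univ
    rw [(Measure.pi ν).eq_zero_of_isEmpty] at h1
    simp at h1
  obtain ⟨x₀⟩ := hne
  have hconst : ∀ y, esK ν l f y = esK ν l f x₀ :=
    fun y => es_const_of_inv (fun j x z => esK_update (hcov j) x z) y x₀
  have hSK : ∫ x, (esK ν l f x) ^ 2 ∂(Measure.pi ν) = (esK ν l f x₀) ^ 2 := by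
    have : (fun x => (esK ν l f x) ^ 2) = fun _ => (esK ν l f x₀) ^ 2 :=
      funext fun y => by rw [hconst y]
    rw [this, integral_const]
    simp
  have hIf : ∫ x, f x ∂(Measure.pi ν) = esK ν l f x₀ := by
    rw [← esK_integral (l := l) hfm hf2]
    have : (fun x => esK ν l f x) = fun _ => esK ν l f x₀ := funext fun y => hconst y
    rw [this, integral_const]
    simp
  have hterm : ∀ i : T,
      Integrable (fun x => esJ ν i (fun y => f y ^ 2) x - (esJ ν i f x) ^ 2) (Measure.pi ν) :=
    fun i => (esJ_int (i := i) (hfm.pow_const 2) hf2.integrable_sq).sub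
      (esJ_memLp hfm hf2).integrable_sq
  have hstep : ∀ i : T,
      ∫ x, (esJ ν i (fun y => f y ^ 2) x - (esJ ν i f x) ^ 2) ∂(Measure.pi ν)
        = (∫ x, f x ^ 2 ∂(Measure.pi ν)) - ∫ x, (esJ ν i f x) ^ 2 ∂(Measure.pi ν) := fun i => by
    rw [integral_sub (esJ_int (i := i) (hfm.pow_const 2) hf2.integrable_sq)
      (esJ_memLp hfm hf2).integrable_sq,
      esJ_integral (hfm.pow_const 2) hf2.integrable_sq]
  have hRHS : ∫ x, ∑ i, (esJ ν i (fun y => f y ^ 2) x - (esJ ν i f x) ^ 2) ∂(Measure.pi ν)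
      = ∑ i : T, ((∫ x, f x ^ 2 ∂(Measure.pi ν))
          - ∫ x, (esJ ν i f x) ^ 2 ∂(Measure.pi ν)) := by
    rw [integral_finset_sum _ (fun i _ => hterm i)]
    exact Finset.sum_congr rfl fun i _ => hstep i
  have hmain := es_main (ν := ν) hln hfm hf2
  have hsum : (l.map (fun i => (∫ x, f x ^ 2 ∂(Measure.pi ν))
      - ∫ x, (esJ ν i f x) ^ 2 ∂(Measure.pi ν))).sum
      = ∑ i : T, ((∫ x, f x ^ 2 ∂(Measure.pi ν))
          - ∫ x, (esJ ν i f x) ^ 2 ∂(Measure.pi ν)) := by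
    rw [hldef]
    exact Finset.sum_map_toList _ _
  rw [hRHS, hIf, ← hSK, ← hsum]
  exact hmain
end

section
/- If the diameter D := sup_{x,y∈E} d(x,y) of a metric space (E,d) is finite, then for any probability measure ν on E and any 1-Lipschitz function f, E^ν exp(f - ν(f)) ≤ exp(D²/8). -/
open Real MeasureTheory

/-- Key analytic inequality behind Hoeffding's lemma. -/
lemma hoeffding_key {p : ℝ} (hp0 : 0 ≤ p) (hp1 : p ≤ 1) {t : ℝ} (ht : 0 ≤ t) :
    1 - p + p * exp t ≤ exp (p * t + t ^ 2 / 8) := by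
  set q : ℝ → ℝ := fun u => 1 - p + p * exp u with hq_def
  have hq_pos : ∀ u, 0 < q u := by
    intro u
    rcases eq_or_lt_of_le hp0 with h | h
    · simp [hq_def, ← h]
    · have : 0 < p * exp u := mul_pos h (exp_pos u)
      have : (0:ℝ) ≤ 1 - p := by linarith
      simp only [hq_def]; positivity
  have hq_deriv : ∀ u, HasDerivAt q (p * exp u) u := by
    intro u
    exact ((Real.hasDerivAt_exp u).const_mul p).const_add (1 - p)
  set g : ℝ → ℝ := fun u => p * u + u ^ 2 / 8 - Real.log (q u) with hg_def
  set g' : ℝ → ℝ := fun u => p + u / 4 - p * exp u / q u with hg'_def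
  have hg_deriv : ∀ u, HasDerivAt g (g' u) u := by
    intro u
    have h1 : HasDerivAt (fun u : ℝ => p * u + u ^ 2 / 8) (p + u / 4) u := by
      have := ((hasDerivAt_pow 2 u).div_const 8).const_add 0
      have h2 := (hasDerivAt_id u).const_mul p
      have := h2.add ((hasDerivAt_pow 2 u).div_const 8)
      refine this.congr_deriv ?_
      ring
    have h3 : HasDerivAt (fun u => Real.log (q u)) (p * exp u / q u) u :=
      (hq_deriv u).log (hq_pos u).ne'
    exact h1.sub h3
  have hg'_deriv : ∀ u, HasDerivAt g'
      (1 / 4 - ((1 - p) * (p * exp u)) / (q u) ^ 2) u := by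
    intro u
    have h1 : HasDerivAt (fun u : ℝ => p + u / 4) (1 / 4) u := by
      simpa using ((hasDerivAt_id u).div_const 4).const_add p
    have h2 : HasDerivAt (fun u => p * exp u / q u)
        ((p * exp u * q u - p * exp u * (p * exp u)) / (q u) ^ 2) u :=
      ((Real.hasDerivAt_exp u).const_mul p).div (hq_deriv u) (hq_pos u).ne'
    have := h1.sub h2
    refine this.congr_deriv ?_
    have : q u = 1 - p + p * exp u := rfl
    rw [this]; ring
  have hg''_nonneg : ∀ u, 0 ≤ 1 / 4 - ((1 - p) * (p * exp u)) / (q u) ^ 2 := by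
    intro u
    rw [sub_nonneg, div_le_iff₀ (pow_pos (hq_pos u) 2)]
    have : q u = 1 - p + p * exp u := rfl
    rw [this]
    nlinarith [sq_nonneg (1 - p - p * exp u), exp_pos u, mul_nonneg hp0 (exp_pos u).le,
      sub_nonneg.mpr hp1]
  have hg'_mono : Monotone g' :=
    monotone_of_deriv_nonneg (fun u => (hg'_deriv u).differentiableAt) fun u => by
      rw [(hg'_deriv u).deriv]; exact hg''_nonneg u
  have hg'_zero : g' 0 = 0 := by
    have : q 0 = 1 := by simp [hq_def]
    simp [hg'_def, this]
  have hg'_nonneg : ∀ u, 0 ≤ u → 0 ≤ g' u := fun u hu => by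
    rw [← hg'_zero]; exact hg'_mono hu
  have hg_mono : MonotoneOn g (Set.Ici 0) := by
    apply monotoneOn_of_deriv_nonneg (convex_Ici 0)
      (Continuous.continuousOn (by
        have : ∀ u, DifferentiableAt ℝ g u := fun u => (hg_deriv u).differentiableAt
        exact (Differentiable.continuous this)))
      (fun u _ => ((hg_deriv u).differentiableAt).differentiableWithinAt)
    intro u hu
    rw [(hg_deriv u).deriv]
    exact hg'_nonneg u (le_of_lt (by simpa using hu))
  have hg_zero : g 0 = 0 := by
    have : q 0 = 1 := by simp [hq_def]
    simp [hg_def, this]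
  have hgt : 0 ≤ g t := by
    rw [← hg_zero]
    exact hg_mono (Set.self_mem_Ici) (Set.mem_Ici.mpr ht) ht
  have hlog : Real.log (q t) ≤ p * t + t ^ 2 / 8 := by
    simp only [hg_def] at hgt; linarith
  calc 1 - p + p * exp t = q t := rfl
    _ ≤ exp (p * t + t ^ 2 / 8) := by
        rw [← Real.exp_log (hq_pos t)]; exact exp_le_exp.mpr hlog



lemma hoeffding_integral {E : Type*} [MeasurableSpace E] (ν : Measure E)
    [IsProbabilityMeasure ν] (g : E → ℝ) (hmeas : AEStronglyMeasurable g ν)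
    (a b : ℝ) (hab : a ≤ b) (hga : ∀ x, a ≤ g x) (hgb : ∀ x, g x ≤ b)
    (hzero : ∫ x, g x ∂ν = 0) :
    ∫ x, Real.exp (g x) ∂ν ≤ Real.exp ((b - a) ^ 2 / 8) := by
  have hne : Nonempty E := by
    have := (IsProbabilityMeasure.ne_zero ν)
    rcases nonempty_of_measure_ne_zero (by simpa using (measure_univ (μ := ν) ▸ one_ne_zero)) with ⟨x, _⟩
    exact ⟨x⟩
  rcases eq_or_lt_of_le hab with heq | hlt
  · -- a = b : g is constant a, and a = 0
    have hgconst : ∀ x, g x = a := fun x => le_antisymm (heq ▸ hgb x) (hga x)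
    have ha0 : a = 0 := by
      have : ∫ x, g x ∂ν = a := by
        rw [show (fun x => g x) = (fun _ => a) from funext hgconst]
        simp
      rw [this] at hzero; exact hzero
    calc ∫ x, Real.exp (g x) ∂ν = ∫ _x, (1:ℝ) ∂ν := by
          congr 1; funext x; rw [hgconst x, ha0, Real.exp_zero]
      _ = 1 := by simp
      _ ≤ Real.exp ((b - a) ^ 2 / 8) := Real.one_le_exp (by positivity)
  · -- integrability of g
    have hC : ∀ x, ‖g x‖ ≤ max |a| |b| := fun x => by
      rw [Real.norm_eq_abs, abs_le]
      constructor
      · calc -(max |a| |b|) ≤ -|a| := by simp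
          _ ≤ a := neg_abs_le a
          _ ≤ g x := hga x
      · exact (hgb x).trans ((le_abs_self b).trans (le_max_right _ _))
    have hgint : Integrable g ν :=
      Integrable.mono' (integrable_const (max |a| |b|)) hmeas (ae_of_all _ hC)
    -- integrability of exp ∘ g
    have hexpmeas : AEStronglyMeasurable (fun x => Real.exp (g x)) ν :=
      Real.continuous_exp.comp_aestronglyMeasurable hmeas
    have hexpint : Integrable (fun x => Real.exp (g x)) ν :=
      Integrable.mono' (integrable_const (Real.exp b)) hexpmeas
        (ae_of_all _ fun x => by
          rw [Real.norm_eq_abs, abs_of_pos (exp_pos _)]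
          exact exp_le_exp.mpr (hgb x))
    set c1 : ℝ := (b * Real.exp a - a * Real.exp b) / (b - a) with hc1
    set c2 : ℝ := (Real.exp b - Real.exp a) / (b - a) with hc2
    have hba : (0:ℝ) < b - a := sub_pos.mpr hlt
    -- pointwise convexity bound
    have hpt : ∀ x, Real.exp (g x) ≤ c1 + c2 * g x := by
      intro x
      have hu : (0:ℝ) ≤ (b - g x) / (b - a) := div_nonneg (by linarith [hgb x]) hba.le
      have hv : (0:ℝ) ≤ (g x - a) / (b - a) := div_nonneg (by linarith [hga x]) hba.le
      have huv : (b - g x) / (b - a) + (g x - a) / (b - a) = 1 := by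
        field_simp
        ring
      have hcomb : (b - g x) / (b - a) * a + (g x - a) / (b - a) * b = g x := by
        field_simp; ring
      have := convexOn_exp.2 (Set.mem_univ a) (Set.mem_univ b) hu hv huv
      rw [smul_eq_mul, smul_eq_mul, smul_eq_mul, smul_eq_mul, hcomb] at this
      calc Real.exp (g x) ≤ (b - g x) / (b - a) * Real.exp a
            + (g x - a) / (b - a) * Real.exp b := this
        _ = c1 + c2 * g x := by rw [hc1, hc2]; field_simp; ring
    have hrhsint : Integrable (fun x => c1 + c2 * g x) ν :=
      (integrable_const c1).add (hgint.const_mul c2)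
    have hint_le : ∫ x, Real.exp (g x) ∂ν ≤ ∫ x, (c1 + c2 * g x) ∂ν :=
      integral_mono hexpint hrhsint hpt
    have hrhs : ∫ x, (c1 + c2 * g x) ∂ν = c1 := by
      rw [integral_add (integrable_const c1) (hgint.const_mul c2),
        integral_const, integral_const_mul, hzero]
      simp
    -- now the key lemma
    have ha0 : a ≤ 0 := by
      have h1 : ∫ x, (a:ℝ) ∂ν ≤ ∫ x, g x ∂ν :=
        integral_mono (integrable_const a) hgint hga
      rw [hzero] at h1; simpa using h1
    have hb0 : 0 ≤ b := by
      have h1 : ∫ x, g x ∂ν ≤ ∫ x, (b:ℝ) ∂ν :=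
        integral_mono hgint (integrable_const b) hgb
      rw [hzero] at h1; simpa using h1
    set p : ℝ := -a / (b - a) with hp
    have hp0 : 0 ≤ p := div_nonneg (by linarith) hba.le
    have hp1 : p ≤ 1 := by rw [div_le_one hba]; linarith
    have hkey := hoeffding_key hp0 hp1 hba.le (t := b - a)
    have hc1eq : c1 = Real.exp a * (1 - p + p * Real.exp (b - a)) := by
      show (b * Real.exp a - a * Real.exp b) / (b - a)
        = Real.exp a * (1 - (-a / (b - a)) + (-a / (b - a)) * Real.exp (b - a))
      have hexp : Real.exp a * Real.exp (b - a) = Real.exp b := by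
        rw [← Real.exp_add]; ring_nf
      field_simp
      linear_combination a * hexp
    have hpt2 : p * (b - a) = -a := by
      show -a / (b - a) * (b - a) = -a
      field_simp
    calc ∫ x, Real.exp (g x) ∂ν ≤ c1 := hint_le.trans_eq hrhs
      _ = Real.exp a * (1 - p + p * Real.exp (b - a)) := hc1eq
      _ ≤ Real.exp a * Real.exp (p * (b - a) + (b - a) ^ 2 / 8) :=
          mul_le_mul_of_nonneg_left hkey (exp_pos a).le
      _ = Real.exp ((b - a) ^ 2 / 8) := by
          rw [← Real.exp_add, hpt2]; congr 1; ring


open MeasureTheory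

/-- If a metric space `(E,d)` has finite diameter `D`, then for any Borel probability
measure `ν` on `E` and any `1`-Lipschitz `f : E → ℝ`,
`E^ν exp(f - ν(f)) ≤ exp(D²/8)`. -/
theorem exp_integrability_of_bounded_diameter
    {E : Type*} [MeasurableSpace E] [MetricSpace E] [BorelSpace E]
    (ν : Measure E) [IsProbabilityMeasure ν]
    (hD : EMetric.diam (Set.univ : Set E) ≠ ⊤)
    (f : E → ℝ) (hf : LipschitzWith 1 f) :
    ∫ x, Real.exp (f x - ∫ y, f y ∂ν) ∂ν ≤
      Real.exp ((Metric.diam (Set.univ : Set E)) ^ 2 / 8) := by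
  have hne : Nonempty E := by
    rcases nonempty_of_measure_ne_zero
      (by simpa using (measure_univ (μ := ν) ▸ one_ne_zero)) with ⟨x, _⟩
    exact ⟨x⟩
  obtain ⟨x0⟩ := hne
  set D : ℝ := Metric.diam (Set.univ : Set E) with hDdef
  have hD0 : 0 ≤ D := Metric.diam_nonneg
  have hbdd : Bornology.IsBounded (Set.univ : Set E) :=
    Metric.isBounded_iff_ediam_ne_top.mpr hD
  have hdist : ∀ x y : E, dist (f x) (f y) ≤ D := by
    intro x y
    calc dist (f x) (f y) ≤ 1 * dist x y := hf.dist_le_mul x y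
      _ = dist x y := one_mul _
      _ ≤ D := Metric.dist_le_diam_of_mem hbdd (Set.mem_univ x) (Set.mem_univ y)
  have hcont : Continuous f := hf.continuous
  have hmeas : AEStronglyMeasurable f ν := hcont.aestronglyMeasurable
  have hfub : ∀ x, f x ≤ f x0 + D := fun x => by
    have := hdist x x0
    rw [Real.dist_eq, abs_le] at this; linarith [this.2]
  have hflb : ∀ x, f x0 - D ≤ f x := fun x => by
    have := hdist x x0
    rw [Real.dist_eq, abs_le] at this; linarith [this.1]
  have hfint : Integrable f ν :=
    Integrable.mono' (integrable_const (|f x0| + D)) hmeas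
      (ae_of_all _ fun x => by
        rw [Real.norm_eq_abs, abs_le]
        constructor
        · have := neg_abs_le (f x0); linarith [hflb x]
        · have := le_abs_self (f x0); linarith [hfub x])
  set a0 : ℝ := sInf (Set.range f) with ha0def
  set b0 : ℝ := sSup (Set.range f) with hb0def
  have hbddA : BddAbove (Set.range f) := ⟨f x0 + D, by rintro _ ⟨x, rfl⟩; exact hfub x⟩
  have hbddB : BddBelow (Set.range f) := ⟨f x0 - D, by rintro _ ⟨x, rfl⟩; exact hflb x⟩
  have ha0le : ∀ x, a0 ≤ f x := fun x => csInf_le hbddB ⟨x, rfl⟩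
  have hb0ge : ∀ x, f x ≤ b0 := fun x => le_csSup hbddA ⟨x, rfl⟩
  have hb0a0 : b0 - a0 ≤ D := by
    have : b0 ≤ a0 + D := by
      apply csSup_le (⟨f x0, x0, rfl⟩ : (Set.range f).Nonempty)
      rintro _ ⟨x, rfl⟩
      have : f x - D ≤ a0 := le_csInf (⟨f x0, x0, rfl⟩ : (Set.range f).Nonempty)
        (by rintro _ ⟨y, rfl⟩; have := hdist x y; rw [Real.dist_eq, abs_le] at this; linarith [this.1])
      linarith
    linarith
  set m : ℝ := ∫ y, f y ∂ν with hm
  set g : E → ℝ := fun x => f x - m with hg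
  have hgmeas : AEStronglyMeasurable g ν := hmeas.sub aestronglyMeasurable_const
  have hgzero : ∫ x, g x ∂ν = 0 := by
    rw [hg]
    rw [integral_sub hfint (integrable_const m), integral_const]
    simp [hm]
  have hab : a0 - m ≤ b0 - m := by have := ha0le x0; have := hb0ge x0; linarith
  have := hoeffding_integral ν g hgmeas (a0 - m) (b0 - m) hab
    (fun x => by simp only [hg]; linarith [ha0le x])
    (fun x => by simp only [hg]; linarith [hb0ge x]) hgzero
  calc ∫ x, Real.exp (f x - ∫ y, f y ∂ν) ∂ν
      = ∫ x, Real.exp (g x) ∂ν := rfl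
    _ ≤ Real.exp ((b0 - m - (a0 - m)) ^ 2 / 8) := this
    _ ≤ Real.exp (D ^ 2 / 8) := by
        apply Real.exp_le_exp.mpr
        apply div_le_div_of_nonneg_right ?_ (by norm_num)
        have h1 : b0 - m - (a0 - m) = b0 - a0 := by ring
        rw [h1]
        have h2 : 0 ≤ b0 - a0 := by have := ha0le x0; have := hb0ge x0; linarith
        exact pow_le_pow_left₀ h2 hb0a0 2
end

section
/- Let ν be a probability measure on a metric space (E,d) such that for every bounded Lipschitz f, E^ν e^{f - ν(f)} ≤ exp(K‖f‖²_Lip / 2). Then for the function F(x) = (1/√n)∑_{i=1}^n (f(x_i) - E f) on E^n with the ℓ¹-sum metric and a Lipschitz f, the Gaussian integrability transfers to give E e^{λF} ≤ exp(K λ² ‖f‖²_Lip / 2) under the product measure ν^{⊗n}. -/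
open MeasureTheory

/-- Tensorization of Gaussian integrability: let `ν` be a probability measure on a metric
space `(E,d)` such that every bounded Lipschitz `g` satisfies
`E^ν e^{g - ν(g)} ≤ exp(K ‖g‖²_Lip / 2)`. Then for `F(x) = (1/√n) ∑_{i=1}^n (f(x_i) - E^ν f)`
on `E^n` (with the `ℓ¹`-sum metric, `F` being `‖f‖_Lip/√n`-Lipschitz in each coordinate)
and any Lipschitz bounded `f`, under the product measure `ν^{⊗n}` one has
`E e^{λ F} ≤ exp(K λ² ‖f‖²_Lip / 2)` for all `λ ∈ ℝ`. -/
theorem gaussian_integrability_tensorization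
    {E : Type*} [MeasurableSpace E] [MetricSpace E] [BorelSpace E]
    (ν : Measure E) [IsProbabilityMeasure ν] (K : ℝ) (hK : 0 < K)
    (hGauss : ∀ (g : E → ℝ) (Lg : NNReal), LipschitzWith Lg g → (∃ M, ∀ x, |g x| ≤ M) →
      ∫ x, Real.exp (g x - ∫ y, g y ∂ν) ∂ν ≤ Real.exp (K * (Lg : ℝ) ^ 2 / 2))
    (n : ℕ) (hn : 0 < n)
    (f : E → ℝ) (Lf : NNReal) (hf : LipschitzWith Lf f) (hfb : ∃ M, ∀ x, |f x| ≤ M)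
    (F : (Fin n → E) → ℝ)
    (hF : F = fun x => (1 / Real.sqrt n) * ∑ i, (f (x i) - ∫ y, f y ∂ν)) :
    ∀ lam : ℝ,
      ∫ x, Real.exp (lam * F x) ∂(Measure.pi fun _ : Fin n => ν) ≤
        Real.exp (K * lam ^ 2 * (Lf : ℝ) ^ 2 / 2) := by
  intro lam
  subst hF
  set m := ∫ y, f y ∂ν with hm
  set c := lam / Real.sqrt n with hc
  set g : E → ℝ := fun y => c * (f y - m) with hg
  have hfi : Integrable f ν := by
    obtain ⟨M, hM⟩ := hfb
    exact (integrable_const M).mono' hf.continuous.aestronglyMeasurable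
      (ae_of_all _ fun x => by simpa using hM x)
  have hgint : ∫ y, g y ∂ν = 0 := by
    simp [hg, integral_const_mul, integral_sub hfi (integrable_const m), hm]
    right
    rw [integral_sub hfi (integrable_const _)]
    simp
  have hgl : LipschitzWith (‖c‖₊ * Lf) g := by
    have hsub : LipschitzWith Lf (fun y => f y - m) := by
      simpa using hf.sub (LipschitzWith.const (b := m))
    have := (lipschitzWith_smul (β := ℝ) c).comp hsub
    simpa [hg, Function.comp_def] using this
  have hgb : ∃ M, ∀ x, |g x| ≤ M := by
    obtain ⟨M, hM⟩ := hfb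
    refine ⟨|c| * (M + |m|), fun x => ?_⟩
    have : |f x - m| ≤ M + |m| := (abs_sub _ _).trans (add_le_add (hM x) le_rfl)
    calc |g x| = |c| * |f x - m| := by rw [hg]; exact abs_mul _ _
    _ ≤ |c| * (M + |m|) := mul_le_mul_of_nonneg_left this (abs_nonneg c)
  have hone := hGauss g (‖c‖₊ * Lf) hgl hgb
  rw [hgint] at hone
  simp only [sub_zero] at hone
  letI : MeasureSpace E := ⟨ν⟩
  have hns : (Real.sqrt n) ^ 2 = n := Real.sq_sqrt (Nat.cast_nonneg n)
  have hnpos : (0:ℝ) < Real.sqrt n := Real.sqrt_pos.mpr (by exact_mod_cast hn)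
  calc ∫ x, Real.exp (lam * ((1 / Real.sqrt n) * ∑ i, (f (x i) - m)))
          ∂(Measure.pi fun _ : Fin n => ν)
      = ∫ x : Fin n → E, ∏ i, Real.exp (g (x i)) := by
        rw [show (Measure.pi fun _ : Fin n => ν) = (volume : Measure (Fin n → E)) from rfl]
        congr 1
        ext x
        rw [← Real.exp_sum]
        congr 1
        rw [Finset.mul_sum, Finset.mul_sum]
        refine Finset.sum_congr rfl fun i _ => ?_
        simp [hg, hc]
        ring
    _ = (∫ x, Real.exp (g x)) ^ n := by
        have := integral_fintype_prod_eq_pow (ι := Fin n) (μ := ν) (fun y => Real.exp (g y))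
        simp at this
        exact this
    _ ≤ (Real.exp (K * ((‖c‖₊ * Lf : NNReal) : ℝ) ^ 2 / 2)) ^ n := by
        exact pow_le_pow_left₀ (integral_nonneg fun x => (Real.exp_pos _).le) hone n
    _ = Real.exp (K * lam ^ 2 * (Lf : ℝ) ^ 2 / 2) := by
        rw [← Real.exp_nat_mul]
        congr 1
        push_cast
        rw [mul_pow, Real.norm_eq_abs, hc, abs_div, div_pow, sq_abs, abs_of_pos hnpos, hns]
        field_simp
end

section
/- Let ψ₀, ψ₁ be Lipschitz functions on ℝ with ‖ψ₁-ψ₀‖_Lip ≤ L, μ_t the probability measures proportional to e^{ψ₀ + t(ψ₁-ψ₀)} m(dx) for a reference probability measure m. Then for any 1-Lipschitz f, the covariance bound |μ_t(f; ψ₁-ψ₀)| ≤ L · μ_t(x;x) holds, where μ_t(x;x) is the variance of the identity under μ_t; consequently |∫ f d(μ₁-μ₀)| ≤ L · sup_t μ_t(x;x). -/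
open MeasureTheory

lemma aux_int_mul {μ : Measure ℝ} {u v : ℝ → ℝ} (hu : MemLp u 2 μ) (hv : MemLp v 2 μ) :
    Integrable (fun x => u x * v x) μ := by
  have := hv.smul (φ := u) hu (r := 1)
  exact memLp_one_iff_integrable.mp this

lemma aux_cov_eq (μ : Measure ℝ) [IsProbabilityMeasure μ] {u v : ℝ → ℝ}
    (hu : MemLp u 2 μ) (hv : MemLp v 2 μ) :
    ∫ z : ℝ × ℝ, (u z.1 - u z.2) * (v z.1 - v z.2) ∂(μ.prod μ) =
      2 * ((∫ x, u x * v x ∂μ) - (∫ x, u x ∂μ) * ∫ x, v x ∂μ) := by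
  have Iu : Integrable u μ := hu.integrable one_le_two
  have Iv : Integrable v μ := hv.integrable one_le_two
  have Iuv : Integrable (fun x => u x * v x) μ := aux_int_mul hu hv
  have h1 : Integrable (fun z : ℝ × ℝ => u z.1 * v z.1) (μ.prod μ) := by
    simpa using Iuv.mul_prod (integrable_const (1 : ℝ))
  have h2 : Integrable (fun z : ℝ × ℝ => u z.2 * v z.2) (μ.prod μ) := by
    simpa using (integrable_const (1 : ℝ)).mul_prod Iuv
  have h3 : Integrable (fun z : ℝ × ℝ => u z.1 * v z.2) (μ.prod μ) := Iu.mul_prod Iv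
  have h4 : Integrable (fun z : ℝ × ℝ => v z.1 * u z.2) (μ.prod μ) := Iv.mul_prod Iu
  have key : (fun z : ℝ × ℝ => (u z.1 - u z.2) * (v z.1 - v z.2)) =
      fun z : ℝ × ℝ => u z.1 * v z.1 + u z.2 * v z.2 - (u z.1 * v z.2 + v z.1 * u z.2) := by
    funext z; ring
  have h12 : Integrable (fun z : ℝ × ℝ => u z.1 * v z.1 + u z.2 * v z.2) (μ.prod μ) := h1.add h2
  have h34 : Integrable (fun z : ℝ × ℝ => u z.1 * v z.2 + v z.1 * u z.2) (μ.prod μ) := h3.add h4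
  rw [key, integral_sub h12 h34, integral_add h1 h2, integral_add h3 h4]
  have e1 : ∫ z : ℝ × ℝ, u z.1 * v z.1 ∂(μ.prod μ) = ∫ x, u x * v x ∂μ := by
    have := integral_prod_mul (μ := μ) (ν := μ) (fun x => u x * v x) (fun _ => (1 : ℝ))
    simpa using this
  have e2 : ∫ z : ℝ × ℝ, u z.2 * v z.2 ∂(μ.prod μ) = ∫ x, u x * v x ∂μ := by
    have := integral_prod_mul (μ := μ) (ν := μ) (fun _ => (1 : ℝ)) (fun x => u x * v x)
    simpa using this
  have e3 : ∫ z : ℝ × ℝ, u z.1 * v z.2 ∂(μ.prod μ) = (∫ x, u x ∂μ) * ∫ x, v x ∂μ :=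
    integral_prod_mul u v
  have e4 : ∫ z : ℝ × ℝ, v z.1 * u z.2 ∂(μ.prod μ) = (∫ x, u x ∂μ) * ∫ x, v x ∂μ := by
    rw [integral_prod_mul v u]; ring
  rw [e1, e2, e3, e4]; ring

lemma aux_cov_bound (μ : Measure ℝ) [IsProbabilityMeasure μ] {u v : ℝ → ℝ} {L : ℝ}
    (hL0 : 0 ≤ L) (hu : MemLp u 2 μ) (hv : MemLp v 2 μ)
    (hid : MemLp (fun x : ℝ => x) 2 μ)
    (hul : ∀ x y, |u x - u y| ≤ |x - y|) (hvl : ∀ x y, |v x - v y| ≤ L * |x - y|) :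
    |(∫ x, u x * v x ∂μ) - (∫ x, u x ∂μ) * ∫ x, v x ∂μ| ≤
      L * ((∫ x, x ^ 2 ∂μ) - (∫ x, x ∂μ) ^ 2) := by
  have hcov := aux_cov_eq μ hu hv
  have hvar := aux_cov_eq μ hid hid
  have hbd : ∫ z : ℝ × ℝ, |u z.1 - u z.2| * |v z.1 - v z.2| ∂(μ.prod μ) ≤
      ∫ z : ℝ × ℝ, L * ((z.1 - z.2) * (z.1 - z.2)) ∂(μ.prod μ) := by
    have hI : Integrable (fun z : ℝ × ℝ => L * ((z.1 - z.2) * (z.1 - z.2))) (μ.prod μ) := by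
      have h1 : Integrable (fun z : ℝ × ℝ => z.1 * z.1) (μ.prod μ) := by
        simpa using (aux_int_mul hid hid).mul_prod (integrable_const (1 : ℝ))
      have h2 : Integrable (fun z : ℝ × ℝ => z.2 * z.2) (μ.prod μ) := by
        simpa using (integrable_const (1 : ℝ)).mul_prod (aux_int_mul hid hid)
      have h3 : Integrable (fun z : ℝ × ℝ => z.1 * z.2) (μ.prod μ) :=
        (hid.integrable one_le_two).mul_prod (hid.integrable one_le_two)
      have : Integrable (fun z : ℝ × ℝ => z.1 * z.1 + z.2 * z.2 - (z.1 * z.2 + z.1 * z.2))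
          (μ.prod μ) := (h1.add h2).sub (h3.add h3)
      exact (this.const_mul L).congr (Filter.Eventually.of_forall fun z => by ring)
    refine integral_mono_of_nonneg (Filter.Eventually.of_forall fun z =>
      mul_nonneg (abs_nonneg _) (abs_nonneg _)) hI
      (Filter.Eventually.of_forall fun z => ?_)
    dsimp only
    calc |u z.1 - u z.2| * |v z.1 - v z.2| ≤ |z.1 - z.2| * (L * |z.1 - z.2|) :=
          mul_le_mul (hul _ _) (hvl _ _) (abs_nonneg _) (abs_nonneg _)
      _ = L * ((z.1 - z.2) * (z.1 - z.2)) := by rw [← abs_mul_abs_self (z.1 - z.2)]; ring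
  have habs : |∫ z : ℝ × ℝ, (u z.1 - u z.2) * (v z.1 - v z.2) ∂(μ.prod μ)| ≤
      ∫ z : ℝ × ℝ, |u z.1 - u z.2| * |v z.1 - v z.2| ∂(μ.prod μ) := by
    simpa [Real.norm_eq_abs, abs_mul] using norm_integral_le_integral_norm (μ := μ.prod μ)
      (fun z : ℝ × ℝ => (u z.1 - u z.2) * (v z.1 - v z.2))
  have hR : ∫ z : ℝ × ℝ, L * ((z.1 - z.2) * (z.1 - z.2)) ∂(μ.prod μ) =
      L * (2 * ((∫ x, x ^ 2 ∂μ) - (∫ x, x ∂μ) ^ 2)) := by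
    rw [integral_const_mul]
    have : (∫ x, x * x ∂μ) - (∫ x, x ∂μ) * ∫ x, x ∂μ =
        (∫ x, x ^ 2 ∂μ) - (∫ x, x ∂μ) ^ 2 := by
      simp [sq]
    rw [hvar, this]
  have hchain := habs.trans hbd
  rw [hcov, hR] at hchain
  have h2 : |2 * ((∫ x, u x * v x ∂μ) - (∫ x, u x ∂μ) * ∫ x, v x ∂μ)| =
      2 * |(∫ x, u x * v x ∂μ) - (∫ x, u x ∂μ) * ∫ x, v x ∂μ| := by
    rw [abs_mul]; norm_num
  rw [h2] at hchain
  linarith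

lemma aux_exp_dom (ψ₀ ψ₁ : ℝ → ℝ) {t : ℝ} (ht : t ∈ Set.Icc (0:ℝ) 1) (x : ℝ) :
    Real.exp (ψ₀ x + t * (ψ₁ x - ψ₀ x)) ≤
      Real.exp (ψ₀ x + 0 * (ψ₁ x - ψ₀ x)) + Real.exp (ψ₀ x + 1 * (ψ₁ x - ψ₀ x)) := by
  have h1 := convexOn_exp.2 (Set.mem_univ (ψ₀ x)) (Set.mem_univ (ψ₀ x + (ψ₁ x - ψ₀ x)))
    (by linarith [ht.2] : (0:ℝ) ≤ 1 - t) ht.1 (by ring)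
  simp only [smul_eq_mul] at h1
  have heq : (1 - t) * ψ₀ x + t * (ψ₀ x + (ψ₁ x - ψ₀ x)) = ψ₀ x + t * (ψ₁ x - ψ₀ x) := by ring
  rw [heq] at h1
  have e0 : (0:ℝ) < Real.exp (ψ₀ x) := Real.exp_pos _
  have e1 : (0:ℝ) < Real.exp (ψ₀ x + (ψ₁ x - ψ₀ x)) := Real.exp_pos _
  have ht0 := ht.1; have ht1 := ht.2
  have g0 : Real.exp (ψ₀ x + 0 * (ψ₁ x - ψ₀ x)) = Real.exp (ψ₀ x) := by norm_num
  have g1 : Real.exp (ψ₀ x + 1 * (ψ₁ x - ψ₀ x)) = Real.exp (ψ₀ x + (ψ₁ x - ψ₀ x)) := by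
    norm_num
  rw [g0, g1]
  nlinarith

/-- Covariance bound along an interpolation of tilted measures: let `ψ₀, ψ₁` be Lipschitz
with `‖ψ₁ - ψ₀‖_Lip ≤ L`, and let `μ_t ∝ e^{ψ₀ + t(ψ₁-ψ₀)} m` for a reference probability
measure `m` (with enough exponential/second moments). Then for every `1`-Lipschitz `f` and
`t ∈ [0,1]`, `|Cov_{μ_t}(f, ψ₁-ψ₀)| ≤ L · Var_{μ_t}(x)`, and consequently
`|∫ f d(μ₁ - μ₀)| ≤ L · sup_{t∈[0,1]} Var_{μ_t}(x)`. -/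
theorem covariance_bound_tilted_interpolation
    (m : Measure ℝ) [IsProbabilityMeasure m]
    (ψ₀ ψ₁ : ℝ → ℝ) (L₀ L₁ : NNReal)
    (hψ₀ : LipschitzWith L₀ ψ₀) (hψ₁ : LipschitzWith L₁ ψ₁)
    (L : ℝ) (hL0 : 0 ≤ L)
    (hL : LipschitzWith (Real.toNNReal L) fun x => ψ₁ x - ψ₀ x)
    (Z : ℝ → ℝ) (hZ : ∀ t, Z t = ∫ x, Real.exp (ψ₀ x + t * (ψ₁ x - ψ₀ x)) ∂m)
    (hZpos : ∀ t ∈ Set.Icc (0 : ℝ) 1, 0 < Z t)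
    (hexp : ∀ t ∈ Set.Icc (0 : ℝ) 1,
      Integrable (fun x => Real.exp (ψ₀ x + t * (ψ₁ x - ψ₀ x))) m)
    (μ : ℝ → Measure ℝ)
    (hμ : ∀ t, μ t = m.withDensity fun x =>
      ENNReal.ofReal (Real.exp (ψ₀ x + t * (ψ₁ x - ψ₀ x)) / Z t))
    (hmom : ∀ t ∈ Set.Icc (0 : ℝ) 1, MemLp (fun x : ℝ => x) 2 (μ t))
    (hψmom : ∀ t ∈ Set.Icc (0 : ℝ) 1, MemLp (fun x => ψ₁ x - ψ₀ x) 2 (μ t))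
    (f : ℝ → ℝ) (hf : LipschitzWith 1 f)
    (hfmom : ∀ t ∈ Set.Icc (0 : ℝ) 1, MemLp f 2 (μ t)) :
    (∀ t ∈ Set.Icc (0 : ℝ) 1,
      |(∫ x, f x * (ψ₁ x - ψ₀ x) ∂(μ t)) -
          (∫ x, f x ∂(μ t)) * ∫ x, ψ₁ x - ψ₀ x ∂(μ t)| ≤
        L * ((∫ x, x ^ 2 ∂(μ t)) - (∫ x, x ∂(μ t)) ^ 2)) ∧
    |(∫ x, f x ∂(μ 1)) - ∫ x, f x ∂(μ 0)| ≤
      L * sSup ((fun t => (∫ x, x ^ 2 ∂(μ t)) - (∫ x, x ∂(μ t)) ^ 2) '' Set.Icc 0 1) := by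
  have h01 : (0:ℝ) ∈ Set.Icc (0:ℝ) 1 := by norm_num
  have h11 : (1:ℝ) ∈ Set.Icc (0:ℝ) 1 := by norm_num
  have hφc : ∀ t : ℝ, Continuous fun x => Real.exp (ψ₀ x + t * (ψ₁ x - ψ₀ x)) :=
    fun t => (hψ₀.continuous.add
      (continuous_const.mul (hψ₁.continuous.sub hψ₀.continuous))).rexp
  -- probability measures
  have hprob : ∀ t ∈ Set.Icc (0:ℝ) 1, IsProbabilityMeasure (μ t) := by
    intro t ht
    constructor
    rw [hμ t, withDensity_apply _ MeasurableSet.univ, setLIntegral_univ]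
    have hint : Integrable (fun x => Real.exp (ψ₀ x + t * (ψ₁ x - ψ₀ x)) / Z t) m :=
      (hexp t ht).div_const _
    rw [← ofReal_integral_eq_lintegral_ofReal hint
      (Filter.Eventually.of_forall fun x => div_nonneg (Real.exp_pos _).le (hZpos t ht).le)]
    rw [integral_div, ← hZ t, div_self (hZpos t ht).ne']
    simp
  -- integral conversion
  have hIeq : ∀ t ∈ Set.Icc (0:ℝ) 1, ∀ h : ℝ → ℝ,
      ∫ x, h x ∂(μ t) = (∫ x, h x * Real.exp (ψ₀ x + t * (ψ₁ x - ψ₀ x)) ∂m) / Z t := by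
    intro t ht h
    have hZt := hZpos t ht
    have hmeas : Measurable fun x => Real.toNNReal (Real.exp (ψ₀ x + t * (ψ₁ x - ψ₀ x)) / Z t) :=
      ((hφc t).div_const (Z t)).measurable.real_toNNReal
    have hcoe : ∀ r : ℝ, ENNReal.ofReal r = (↑(Real.toNNReal r) : ENNReal) := fun r => rfl
    rw [hμ t]
    simp_rw [hcoe]
    rw [integral_withDensity_eq_integral_smul hmeas h, ← integral_div]
    refine integral_congr_ae (Filter.Eventually.of_forall fun x => ?_)
    dsimp only
    rw [NNReal.smul_def, Real.coe_toNNReal _ (div_nonneg (Real.exp_pos _).le hZt.le),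
      smul_eq_mul]
    ring
  -- integrability conversion
  have hIconv : ∀ t ∈ Set.Icc (0:ℝ) 1, ∀ h : ℝ → ℝ, Integrable h (μ t) →
      Integrable (fun x => h x * Real.exp (ψ₀ x + t * (ψ₁ x - ψ₀ x))) m := by
    intro t ht h hh
    have hd : Measurable fun x => ENNReal.ofReal (Real.exp (ψ₀ x + t * (ψ₁ x - ψ₀ x)) / Z t) :=
      ENNReal.measurable_ofReal.comp ((hφc t).div_const (Z t)).measurable
    rw [hμ t, integrable_withDensity_iff hd
      (Filter.Eventually.of_forall fun x => ENNReal.ofReal_lt_top)] at hh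
    have hZt := hZpos t ht
    refine (hh.const_mul (Z t)).congr (Filter.Eventually.of_forall fun x => ?_)
    dsimp only
    rw [ENNReal.toReal_ofReal (div_nonneg (Real.exp_pos _).le hZt.le)]
    field_simp
  -- the dominating weight
  set E : ℝ → ℝ := fun x =>
    Real.exp (ψ₀ x + 0 * (ψ₁ x - ψ₀ x)) + Real.exp (ψ₀ x + 1 * (ψ₁ x - ψ₀ x)) with hEdef
  have hdom : ∀ t ∈ Set.Icc (0:ℝ) 1, ∀ x : ℝ,
      Real.exp (ψ₀ x + t * (ψ₁ x - ψ₀ x)) ≤ E x := fun t ht x => aux_exp_dom ψ₀ ψ₁ ht x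
  have habsE : ∀ h : ℝ → ℝ, Integrable h (μ 0) → Integrable h (μ 1) →
      Integrable (fun x => |h x| * E x) m := by
    intro h hml0 hml1
    have A0 := hIconv 0 h01 h hml0
    have A1 := hIconv 1 h11 h hml1
    refine (A0.abs.add A1.abs).congr (Filter.Eventually.of_forall fun x => ?_)
    simp [hEdef, abs_mul, Real.abs_exp, mul_add]
  -- integrability from domination
  have hFt : ∀ (h : ℝ → ℝ), Continuous h → Integrable (fun x => |h x| * E x) m →
      ∀ s ∈ Set.Icc (0:ℝ) 1,
        Integrable (fun x => h x * Real.exp (ψ₀ x + s * (ψ₁ x - ψ₀ x))) m := by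
    intro h hc hE s hs
    refine hE.mono' ((hc.mul (hφc s)).aestronglyMeasurable)
      (Filter.Eventually.of_forall fun x => ?_)
    rw [Real.norm_eq_abs, abs_mul, abs_of_pos (Real.exp_pos _)]
    exact mul_le_mul_of_nonneg_left (hdom s hs x) (abs_nonneg _)
  -- continuity of s ↦ ∫ h e^{φ_s}
  have hNC : ∀ (h : ℝ → ℝ), Continuous h → Integrable (fun x => |h x| * E x) m →
      ContinuousOn (fun s => ∫ x, h x * Real.exp (ψ₀ x + s * (ψ₁ x - ψ₀ x)) ∂m)
        (Set.Icc (0:ℝ) 1) := by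
    intro h hc hE t ht
    refine continuousWithinAt_of_dominated (bound := fun x => |h x| * E x)
      (Filter.eventually_of_mem self_mem_nhdsWithin fun s hs =>
        (hc.mul (hφc s)).aestronglyMeasurable)
      (Filter.eventually_of_mem self_mem_nhdsWithin fun s hs =>
        Filter.Eventually.of_forall fun x => ?_) hE
      (Filter.Eventually.of_forall fun x => ?_)
    · rw [Real.norm_eq_abs, abs_mul, abs_of_pos (Real.exp_pos _)]
      exact mul_le_mul_of_nonneg_left (hdom s hs x) (abs_nonneg _)
    · have : Continuous fun s : ℝ => h x * Real.exp (ψ₀ x + s * (ψ₁ x - ψ₀ x)) :=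
        continuous_const.mul ((continuous_const.add
          (continuous_id.mul continuous_const)).rexp)
      exact this.continuousWithinAt
  -- differentiability of s ↦ ∫ h e^{φ_s} on (0,1)
  have hND : ∀ (h : ℝ → ℝ), Continuous h → Integrable (fun x => |h x| * E x) m →
      Integrable (fun x => |h x * (ψ₁ x - ψ₀ x)| * E x) m →
      ∀ t ∈ Set.Ioo (0:ℝ) 1,
        HasDerivAt (fun s => ∫ x, h x * Real.exp (ψ₀ x + s * (ψ₁ x - ψ₀ x)) ∂m)
          (∫ x, h x * (ψ₁ x - ψ₀ x) * Real.exp (ψ₀ x + t * (ψ₁ x - ψ₀ x)) ∂m) t := by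
    intro h hc hE1 hE2 t ht
    obtain ⟨ht0, ht1⟩ := ht
    have hεpos : (0:ℝ) < min t (1 - t) := lt_min ht0 (by linarith)
    have hball : Metric.ball t (min t (1 - t)) ⊆ Set.Icc (0:ℝ) 1 := by
      intro s hs
      rw [Metric.mem_ball, Real.dist_eq] at hs
      have h1 := abs_lt.mp hs
      have h2 := min_le_left t (1 - t)
      have h3 := min_le_right t (1 - t)
      constructor <;> [linarith; linarith]
    have hderiv := hasDerivAt_integral_of_dominated_loc_of_deriv_le (μ := m)
      (F := fun s x => h x * Real.exp (ψ₀ x + s * (ψ₁ x - ψ₀ x)))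
      (F' := fun s x => h x * (ψ₁ x - ψ₀ x) * Real.exp (ψ₀ x + s * (ψ₁ x - ψ₀ x)))
      (x₀ := t) (bound := fun x => |h x * (ψ₁ x - ψ₀ x)| * E x) (Metric.ball_mem_nhds t hεpos)
      (Filter.Eventually.of_forall fun s => (hc.mul (hφc s)).aestronglyMeasurable)
      (hFt h hc hE1 t ⟨ht0.le, ht1.le⟩)
      (((hc.mul (hψ₁.continuous.sub hψ₀.continuous)).mul (hφc t)).aestronglyMeasurable)
      (Filter.Eventually.of_forall fun x => fun s hs => ?_) hE2
      (Filter.Eventually.of_forall fun x => fun s hs => ?_)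
    · exact hderiv.2
    · rw [Real.norm_eq_abs, abs_mul, abs_mul, abs_of_pos (Real.exp_pos _), ← abs_mul]
      exact mul_le_mul_of_nonneg_left (hdom s (hball hs) x) (abs_nonneg _)
    · have hd : HasDerivAt (fun s : ℝ => ψ₀ x + s * (ψ₁ x - ψ₀ x)) (ψ₁ x - ψ₀ x) s :=
        (hasDerivAt_mul_const (ψ₁ x - ψ₀ x)).const_add (ψ₀ x)
      have := (hd.exp).const_mul (h x)
      exact this.congr_deriv (by ring)
  -- Part 1 : the covariance bound
  have part1 : ∀ t ∈ Set.Icc (0:ℝ) 1,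
      |(∫ x, f x * (ψ₁ x - ψ₀ x) ∂(μ t)) -
          (∫ x, f x ∂(μ t)) * ∫ x, ψ₁ x - ψ₀ x ∂(μ t)| ≤
        L * ((∫ x, x ^ 2 ∂(μ t)) - (∫ x, x ∂(μ t)) ^ 2) := by
    intro t ht
    haveI := hprob t ht
    refine aux_cov_bound (μ t) hL0 (hfmom t ht) (hψmom t ht) (hmom t ht) ?_ ?_
    · intro x y
      have := hf.dist_le_mul x y
      simpa [Real.dist_eq] using this
    · intro x y
      have := hL.dist_le_mul x y
      rw [Real.dist_eq, Real.dist_eq, Real.coe_toNNReal L hL0] at this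
      simpa using this
  refine ⟨part1, ?_⟩
  -- integrability facts
  have If : ∀ t ∈ Set.Icc (0:ℝ) 1, Integrable f (μ t) := by
    intro t ht; haveI := hprob t ht; exact (hfmom t ht).integrable one_le_two
  have Ig : ∀ t ∈ Set.Icc (0:ℝ) 1, Integrable (fun x => ψ₁ x - ψ₀ x) (μ t) := by
    intro t ht; haveI := hprob t ht; exact (hψmom t ht).integrable one_le_two
  have Ifg : ∀ t ∈ Set.Icc (0:ℝ) 1, Integrable (fun x => f x * (ψ₁ x - ψ₀ x)) (μ t) :=
    fun t ht => aux_int_mul (hfmom t ht) (hψmom t ht)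
  have habsf : Integrable (fun x => |f x| * E x) m := habsE f (If 0 h01) (If 1 h11)
  have habsg : Integrable (fun x => |ψ₁ x - ψ₀ x| * E x) m :=
    habsE (fun x => ψ₁ x - ψ₀ x) (Ig 0 h01) (Ig 1 h11)
  have habsfg : Integrable (fun x => |f x * (ψ₁ x - ψ₀ x)| * E x) m :=
    habsE (fun x => f x * (ψ₁ x - ψ₀ x)) (Ifg 0 h01) (Ifg 1 h11)
  have habs1 : Integrable (fun x => |(1:ℝ)| * E x) m := by
    haveI := hprob 0 h01
    haveI := hprob 1 h11
    exact habsE (fun _ => (1:ℝ)) (integrable_const 1) (integrable_const 1)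
  have habs1g : Integrable (fun x => |(1:ℝ) * (ψ₁ x - ψ₀ x)| * E x) m := by
    refine habsg.congr (Filter.Eventually.of_forall fun x => ?_)
    simp
  have hZfun : Z = fun s => ∫ x, Real.exp (ψ₀ x + s * (ψ₁ x - ψ₀ x)) ∂m := funext hZ
  -- continuity and derivative of Z
  have hZcont : ContinuousOn Z (Set.Icc (0:ℝ) 1) := by
    have := hNC (fun _ => (1:ℝ)) continuous_const habs1
    simp only [one_mul] at this
    rw [hZfun]
    exact this
  have hZder : ∀ t ∈ Set.Ioo (0:ℝ) 1, HasDerivAt Z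
      (∫ x, (ψ₁ x - ψ₀ x) * Real.exp (ψ₀ x + t * (ψ₁ x - ψ₀ x)) ∂m) t := by
    intro t ht
    have := hND (fun _ => (1:ℝ)) continuous_const habs1 habs1g t ht
    simp only [one_mul] at this
    rw [hZfun]
    exact this
  -- the interpolation function and its derivative
  set F : ℝ → ℝ := fun s =>
    (∫ x, f x * Real.exp (ψ₀ x + s * (ψ₁ x - ψ₀ x)) ∂m) / Z s with hFdef
  set D : ℝ → ℝ := fun s =>
    (∫ x, f x * (ψ₁ x - ψ₀ x) * Real.exp (ψ₀ x + s * (ψ₁ x - ψ₀ x)) ∂m) / Z s -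
      ((∫ x, f x * Real.exp (ψ₀ x + s * (ψ₁ x - ψ₀ x)) ∂m) / Z s) *
      ((∫ x, (ψ₁ x - ψ₀ x) * Real.exp (ψ₀ x + s * (ψ₁ x - ψ₀ x)) ∂m) / Z s) with hDdef
  have hFcont : ContinuousOn F (Set.Icc (0:ℝ) 1) :=
    (hNC f hf.continuous habsf).div hZcont (fun t ht => (hZpos t ht).ne')
  have hFderiv : ∀ t ∈ Set.Ioo (0:ℝ) 1, HasDerivAt F (D t) t := by
    intro t ht
    have h1 := hND f hf.continuous habsf habsfg t ht
    have h2 := hZder t ht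
    have hZne : Z t ≠ 0 := (hZpos t ⟨ht.1.le, ht.2.le⟩).ne'
    have hdd := h1.div h2 hZne
    rw [hFdef, hDdef]
    refine hdd.congr_deriv ?_
    dsimp only
    generalize (∫ x, f x * (ψ₁ x - ψ₀ x) * Real.exp (ψ₀ x + t * (ψ₁ x - ψ₀ x)) ∂m) = A
    generalize (∫ x, f x * Real.exp (ψ₀ x + t * (ψ₁ x - ψ₀ x)) ∂m) = B
    generalize (∫ x, (ψ₁ x - ψ₀ x) * Real.exp (ψ₀ x + t * (ψ₁ x - ψ₀ x)) ∂m) = C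
    field_simp
  obtain ⟨c, hc, hceq⟩ := exists_hasDerivAt_eq_slope F D one_pos hFcont hFderiv
  have hcIcc : c ∈ Set.Icc (0:ℝ) 1 := ⟨hc.1.le, hc.2.le⟩
  -- identify D c with the covariance under μ c
  have e1 : ∫ x, f x * (ψ₁ x - ψ₀ x) ∂(μ c) =
      (∫ x, f x * (ψ₁ x - ψ₀ x) * Real.exp (ψ₀ x + c * (ψ₁ x - ψ₀ x)) ∂m) / Z c :=
    hIeq c hcIcc _
  have e2 : ∫ x, f x ∂(μ c) =
      (∫ x, f x * Real.exp (ψ₀ x + c * (ψ₁ x - ψ₀ x)) ∂m) / Z c := hIeq c hcIcc _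
  have e3 : ∫ x, ψ₁ x - ψ₀ x ∂(μ c) =
      (∫ x, (ψ₁ x - ψ₀ x) * Real.exp (ψ₀ x + c * (ψ₁ x - ψ₀ x)) ∂m) / Z c :=
    hIeq c hcIcc _
  have hDc : D c = (∫ x, f x * (ψ₁ x - ψ₀ x) ∂(μ c)) -
      (∫ x, f x ∂(μ c)) * ∫ x, ψ₁ x - ψ₀ x ∂(μ c) := by
    rw [hDdef, e1, e2, e3]
  -- identify F 1, F 0
  have hF1 : ∫ x, f x ∂(μ 1) = F 1 := by rw [hFdef]; exact hIeq 1 h11 f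
  have hF0 : ∫ x, f x ∂(μ 0) = F 0 := by rw [hFdef]; exact hIeq 0 h01 f
  have hslope : F 1 - F 0 = D c := by
    rw [hceq]; norm_num
  -- continuity of the variance
  have hVcont : ContinuousOn
      (fun t => (∫ x, x ^ 2 ∂(μ t)) - (∫ x, x ∂(μ t)) ^ 2) (Set.Icc (0:ℝ) 1) := by
    have hsq : ∀ t ∈ Set.Icc (0:ℝ) 1, Integrable (fun x : ℝ => x ^ 2) (μ t) := by
      intro t ht
      exact (aux_int_mul (hmom t ht) (hmom t ht)).congr
        (Filter.Eventually.of_forall fun x => (pow_two x).symm)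
    have hsqE : Integrable (fun x : ℝ => |x ^ 2| * E x) m :=
      habsE (fun x : ℝ => x ^ 2) (hsq 0 h01) (hsq 1 h11)
    have hidE : Integrable (fun x : ℝ => |x| * E x) m := by
      haveI := hprob 0 h01; haveI := hprob 1 h11
      exact habsE (fun x : ℝ => x) ((hmom 0 h01).integrable one_le_two)
        ((hmom 1 h11).integrable one_le_two)
    have c1 := hNC (fun x : ℝ => x ^ 2) (continuous_pow 2) hsqE
    have c2 := hNC (fun x : ℝ => x) continuous_id hidE
    refine ContinuousOn.congr
      ((c1.div hZcont fun t ht => (hZpos t ht).ne').sub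
        ((c2.div hZcont fun t ht => (hZpos t ht).ne').pow 2)) ?_
    intro t ht
    dsimp only
    rw [hIeq t ht (fun x : ℝ => x ^ 2), hIeq t ht (fun x : ℝ => x)]
    simp [Pi.div_apply]
  have hbdd : BddAbove
      ((fun t => (∫ x, x ^ 2 ∂(μ t)) - (∫ x, x ∂(μ t)) ^ 2) '' Set.Icc 0 1) :=
    (isCompact_Icc.image_of_continuousOn hVcont).bddAbove
  have hmem : (∫ x, x ^ 2 ∂(μ c)) - (∫ x, x ∂(μ c)) ^ 2 ∈
      ((fun t => (∫ x, x ^ 2 ∂(μ t)) - (∫ x, x ∂(μ t)) ^ 2) '' Set.Icc 0 1) :=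
    Set.mem_image_of_mem _ hcIcc
  calc |(∫ x, f x ∂(μ 1)) - ∫ x, f x ∂(μ 0)| = |D c| := by
        rw [hF1, hF0, hslope]
    _ ≤ L * ((∫ x, x ^ 2 ∂(μ c)) - (∫ x, x ∂(μ c)) ^ 2) := by
        rw [hDc]; exact part1 c hcIcc
    _ ≤ L * sSup ((fun t => (∫ x, x ^ 2 ∂(μ t)) - (∫ x, x ∂(μ t)) ^ 2) '' Set.Icc 0 1) :=
        mul_le_mul_of_nonneg_left (le_csSup hbdd hmem) hL0
end
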